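/- Let 1 < β ≤ 2 and J = { Σ_{k≥0} b_k β^{−k} : b_k ∈ {−1,+1} }. Then J is the closed interval [−β/(β−1), β/(β−1)]. -/

import Mathlib

noncomputable def pmSeq (β x : ℝ) : ℕ → ℝ
  | 0 => x
  | n + 1 => β * (pmSeq β x n - (if 0 ≤ pmSeq β x n then 1 else -1))

theorem pm_beta_expansions_fill_interval (β : ℝ) (h1 : 1 < β) (h2 : β ≤ 2) :
    {x : ℝ | ∃ b : ℕ → ℝ, (∀ k, b k = 1 ∨ b k = -1) ∧ x = ∑' k : ℕ, b k * (β⁻¹) ^ k} =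
      Set.Icc (-(β / (β - 1))) (β / (β - 1)) := by
  have hβ0 : (0 : ℝ) < β := by linarith
  have hb1 : (0 : ℝ) < β - 1 := by linarith
  have hinv0 : (0 : ℝ) < β⁻¹ := by positivity
  have hinv1 : β⁻¹ < 1 := inv_lt_one_of_one_lt₀ h1
  set S := β / (β - 1) with hSdef
  have hSid : S * (β - 1) = β := div_mul_cancel₀ β hb1.ne'
  have hS0 : 0 < S := div_pos hβ0 hb1
  have hgeo : ∑' k : ℕ, (β⁻¹) ^ k = S := by
    rw [tsum_geometric_of_lt_one hinv0.le hinv1, hSdef,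
      show (1 : ℝ) - β⁻¹ = (β - 1) / β by field_simp, inv_div]
  have hgeosum : Summable (fun k : ℕ => (β⁻¹) ^ k) :=
    summable_geometric_of_lt_one hinv0.le hinv1
  ext x
  simp only [Set.mem_setOf_eq, Set.mem_Icc]
  constructor
  · rintro ⟨b, hb, rfl⟩
    have habs : ∀ k : ℕ, ‖b k * (β⁻¹) ^ k‖ = (β⁻¹) ^ k := by
      intro k
      rcases hb k with h | h <;>
        simp [h, abs_of_pos hβ0, abs_of_nonneg (pow_nonneg hinv0.le k)]
    have hsumnorm : Summable (fun k : ℕ => ‖b k * (β⁻¹) ^ k‖) := by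
      simpa only [habs] using hgeosum
    have hle : |∑' k : ℕ, b k * (β⁻¹) ^ k| ≤ S := by
      calc |∑' k : ℕ, b k * (β⁻¹) ^ k| ≤ ∑' k : ℕ, ‖b k * (β⁻¹) ^ k‖ :=
            norm_tsum_le_tsum_norm hsumnorm
        _ = ∑' k : ℕ, (β⁻¹) ^ k := tsum_congr habs
        _ = S := hgeo
    exact abs_le.mp hle
  · rintro ⟨hx1, hx2⟩
    set y : ℕ → ℝ := pmSeq β x with hy
    set b : ℕ → ℝ := fun n => if 0 ≤ y n then 1 else -1 with hbdef
    have hbval : ∀ k, b k = 1 ∨ b k = -1 := by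
      intro k; by_cases h : 0 ≤ y k
      · left; simp [hbdef, h]
      · right; simp [hbdef, h]
    have hrec : ∀ n, y (n + 1) = β * (y n - b n) := fun n => rfl
    have hinvar : ∀ n, -S ≤ y n ∧ y n ≤ S := by
      intro n
      induction n with
      | zero => exact ⟨hx1, hx2⟩
      | succ n ih =>
        rw [hrec]
        by_cases h : 0 ≤ y n
        · rw [show b n = 1 from if_pos h]
          constructor <;> nlinarith [ih.1, ih.2]
        · rw [show b n = -1 from if_neg h]
          push_neg at h
          constructor <;> nlinarith [ih.1, ih.2]
    have key : ∀ n, x = (∑ k ∈ Finset.range n, b k * (β⁻¹) ^ k) + (β⁻¹) ^ n * y n := by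
      intro n
      induction n with
      | zero => simp [hy, pmSeq]
      | succ n ih =>
        rw [Finset.sum_range_succ, hrec n, pow_succ, ih]
        have hx' : β⁻¹ ^ n * β⁻¹ * (β * (y n - b n)) = β⁻¹ ^ n * (y n - b n) := by
          field_simp
        rw [hx']; ring
    have hsum : Summable (fun k : ℕ => b k * (β⁻¹) ^ k) := by
      apply Summable.of_norm_bounded hgeosum
      intro k
      rcases hbval k with h | h <;>
        simp [h, abs_of_pos hβ0, abs_of_nonneg (pow_nonneg hinv0.le k), le_refl]
    have h0 : Filter.Tendsto (fun n => (β⁻¹) ^ n * y n) Filter.atTop (nhds 0) := by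
      have hbound : ∀ n, ‖(β⁻¹) ^ n * y n‖ ≤ S * (β⁻¹) ^ n := by
        intro n
        have hyb : |y n| ≤ S := abs_le.mpr (hinvar n)
        have heq : ‖(β⁻¹) ^ n * y n‖ = (β⁻¹) ^ n * |y n| := by
          rw [norm_mul, Real.norm_eq_abs, Real.norm_eq_abs,
            abs_of_nonneg (pow_nonneg hinv0.le n)]
        rw [heq, mul_comm S ((β⁻¹) ^ n)]
        exact mul_le_mul_of_nonneg_left hyb (pow_nonneg hinv0.le n)
      have hlim : Filter.Tendsto (fun n => S * (β⁻¹) ^ n) Filter.atTop (nhds 0) := by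
        have := (tendsto_pow_atTop_nhds_zero_of_lt_one hinv0.le hinv1).const_mul S
        simpa using this
      exact squeeze_zero_norm hbound hlim
    have htend : Filter.Tendsto (fun n => ∑ k ∈ Finset.range n, b k * (β⁻¹) ^ k)
        Filter.atTop (nhds x) := by
      have heq : (fun n => ∑ k ∈ Finset.range n, b k * (β⁻¹) ^ k)
          = fun n => x - (β⁻¹) ^ n * y n := by
        funext n
        have := key n
        linarith
      rw [heq]
      have := (tendsto_const_nhds (x := x) (f := Filter.atTop (α := ℕ))).sub h0
      simpa using this
    exact ⟨b, hbval, tendsto_nhds_unique htend hsum.hasSum.tendsto_sum_nat⟩
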